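/- arXiv:1806.00009 — 4 statements merged into one kernel-verified Lean document; each statement's English description precedes it below -/
import Mathlib

section
/- Let B be a Steiner triple system of order w−1 on points {1,...,w−1}, and let D be an i-dimensional subspace of GF(2)^{w−1} orthogonal to the characteristic vector of every block of B. Let M be an i × (w−1) generator matrix for D. Then each of the 2^i − 1 nonzero column vectors of height i occurs exactly w/2^i times as a column of M, and the all-zero column occurs exactly w/2^i − 1 times. In particular, 2^i divides w. -/
/-- A Steiner triple system. -/
def IsSTS {V : Type*} [DecidableEq V] (B : Finset (Finset V)) : Prop :=
  (∀ b ∈ B, b.card = 3) ∧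
  ∀ p : Finset V, p.card = 2 → ∃! b, b ∈ B ∧ p ⊆ b

section Aux

open Finset

/-- The sign character GF(2) → ℤ. -/
def STSsgn (a : ZMod 2) : ℤ := if a = 0 then 1 else -1

lemma STSsgn_add (a b : ZMod 2) : STSsgn (a + b) = STSsgn a * STSsgn b := by
  revert a b; decide

lemma zmod2_ne_zero {a : ZMod 2} (h : a ≠ 0) : a = 1 := by revert a; decide

lemma STSsgn_sum_zero {i : ℕ} (d : Fin i → ZMod 2) (hd : d ≠ 0) :
    ∑ c : Fin i → ZMod 2, STSsgn (∑ t, c t * d t) = 0 := by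
  obtain ⟨t0, ht0⟩ : ∃ t0, d t0 ≠ 0 := by
    by_contra h; push_neg at h; exact hd (funext fun t => h t)
  set e : Fin i → ZMod 2 := Pi.single t0 1 with he
  have hed : ∑ t, e t * d t = 1 := by
    rw [Finset.sum_eq_single t0]
    · simp [he, zmod2_ne_zero ht0]
    · intro b _ hb; simp [he, Pi.single_apply, hb]
    · simp
  have key : ∑ c : Fin i → ZMod 2, STSsgn (∑ t, c t * d t)
      = ∑ c : Fin i → ZMod 2, -STSsgn (∑ t, c t * d t) := by
    rw [← Equiv.sum_comp (Equiv.addRight e) (fun c => STSsgn (∑ t, c t * d t))]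
    apply Finset.sum_congr rfl
    intro c _
    have : ∑ t, (Equiv.addRight e c) t * d t = (∑ t, c t * d t) + ∑ t, e t * d t := by
      rw [← Finset.sum_add_distrib]
      apply Finset.sum_congr rfl
      intro t _
      simp [add_mul]
    rw [this, hed, STSsgn_add]
    simp [STSsgn]
  rw [Finset.sum_neg_distrib] at key
  linarith [key]

lemma STSsgn_sum {i : ℕ} (d : Fin i → ZMod 2) :
    ∑ c : Fin i → ZMod 2, STSsgn (∑ t, c t * d t) = if d = 0 then (2 ^ i : ℤ) else 0 := by
  split
  · next h =>
    subst h
    simp [STSsgn, Fintype.card_fun, ZMod.card]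
  · next h => exact STSsgn_sum_zero d h

lemma sts_third {V : Type*} [DecidableEq V] {B : Finset (Finset V)} (hB : IsSTS B)
    {p q : V} (hpq : p ≠ q) :
    ∃ r : V, r ≠ p ∧ r ≠ q ∧ ({p, q, r} : Finset V) ∈ B ∧
      ∀ b ∈ B, p ∈ b → q ∈ b → b = {p, q, r} := by
  obtain ⟨b, ⟨hbB, hsub⟩, huniq⟩ := hB.2 {p, q} (Finset.card_pair hpq)
  have hb3 : b.card = 3 := hB.1 b hbB
  have hsd : (b \ {p, q}).card = 1 := by
    rw [Finset.card_sdiff_of_subset hsub, hb3, Finset.card_pair hpq]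
  obtain ⟨r, hr⟩ := Finset.card_eq_one.mp hsd
  have hrb : r ∈ b \ {p, q} := hr ▸ Finset.mem_singleton_self r
  have hrp : r ≠ p := by
    intro h; subst h
    exact (Finset.mem_sdiff.mp hrb).2 (by simp)
  have hrq : r ≠ q := by
    intro h; subst h
    exact (Finset.mem_sdiff.mp hrb).2 (by simp)
  have hbeq : b = {p, q, r} := by
    have h1 : b \ {p, q} ∪ {p, q} = b := Finset.sdiff_union_of_subset hsub
    rw [← h1, hr]
    ext a
    simp
    tauto
  refine ⟨r, hrp, hrq, hbeq ▸ hbB, fun b' hb' hp hq => ?_⟩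
  rw [← hbeq]
  exact huniq b' ⟨hb', by intro a ha; simp at ha; rcases ha with h | h <;> subst h <;> assumption⟩

lemma zmod2_solve : ∀ a b c : ZMod 2, a + b + c = 0 → c = a + b := by decide

/-- The support of a nonzero vector orthogonal to all blocks of an STS has
cardinality `(v+1)/2`. -/
lemma sts_support {V : Type*} [Fintype V] [DecidableEq V] {B : Finset (Finset V)} (hB : IsSTS B)
    {x : V → ZMod 2} (hx : x ≠ 0) (hxorth : ∀ b ∈ B, ∑ j ∈ b, x j = 0) :
    2 * (Finset.univ.filter fun j => x j = 1).card = Fintype.card V + 1 := by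
  classical
  have H : ∀ p q : V, p ≠ q → ∃ r : V, r ≠ p ∧ r ≠ q ∧ ({p, q, r} : Finset V) ∈ B ∧
      ∀ b ∈ B, p ∈ b → q ∈ b → b = {p, q, r} := fun p q h => sts_third hB h
  choose! t h1 h2 h3 h4 using H
  have hsum : ∀ p q, p ≠ q → x p + x q + x (t p q) = 0 := by
    intro p q hpq
    have hb := hxorth _ (h3 p q hpq)
    have e1 : ({p, q, t p q} : Finset V) = insert p (insert q {t p q}) := rfl
    rw [e1, Finset.sum_insert (by simp [hpq, (h1 p q hpq).symm] : p ∉ insert q {t p q}),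
      Finset.sum_insert (by simp [(h2 p q hpq).symm] : q ∉ ({t p q} : Finset V)),
      Finset.sum_singleton] at hb
    rw [← add_assoc] at hb
    exact hb
  have hinv : ∀ p q, p ≠ q → t p (t p q) = q := by
    intro p q hpq
    have hpr : p ≠ t p q := (h1 p q hpq).symm
    have := h4 p (t p q) hpr {p, q, t p q} (h3 p q hpq) (by simp) (by simp)
    have hq : q ∈ ({p, t p q, t p (t p q)} : Finset V) := by
      rw [← this]; simp
    simp only [Finset.mem_insert, Finset.mem_singleton] at hq
    rcases hq with h | h | h
    · exact absurd h.symm hpq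
    · exact absurd h.symm (h2 p q hpq)
    · exact h.symm
  set N := Finset.univ.filter fun j => x j = 1 with hN
  set Z := Finset.univ.filter fun j => ¬ x j = 1 with hZ
  have hmemN : ∀ j, j ∈ N ↔ x j = 1 := by intro j; simp [hN]
  have hmemZ : ∀ j, j ∈ Z ↔ x j = 0 := by
    intro j; simp [hZ]
    have : ∀ a : ZMod 2, ¬ a = 1 ↔ a = 0 := by decide
    exact this (x j)
  have hbij : (N ×ˢ Z).card = N.offDiag.card := by
    apply Finset.card_bij' (fun a _ => (a.1, t a.1 a.2)) (fun a _ => (a.1, t a.1 a.2))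
    · rintro ⟨n, z⟩ ha
      rw [Finset.mem_product] at ha
      have hxn := (hmemN n).mp ha.1
      have hxz := (hmemZ z).mp ha.2
      have hnz : n ≠ z := by intro h; rw [h, hxz] at hxn; exact one_ne_zero hxn.symm
      have hxt : x (t n z) = 1 := by
        have := zmod2_solve _ _ _ (hsum n z hnz)
        rw [this, hxn, hxz, add_zero]
      rw [Finset.mem_offDiag]
      exact ⟨ha.1, (hmemN _).mpr hxt, (h1 n z hnz).symm⟩
    · rintro ⟨n, m⟩ ha
      rw [Finset.mem_offDiag] at ha
      obtain ⟨hn, hm, hnm⟩ := ha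
      have hxn := (hmemN n).mp hn
      have hxm := (hmemN m).mp hm
      have hxt : x (t n m) = 0 := by
        have := zmod2_solve _ _ _ (hsum n m hnm)
        rw [this, hxn, hxm]
        decide
      rw [Finset.mem_product]
      exact ⟨hn, (hmemZ _).mpr hxt⟩
    · rintro ⟨n, z⟩ ha
      rw [Finset.mem_product] at ha
      have hxn := (hmemN n).mp ha.1
      have hxz := (hmemZ z).mp ha.2
      have hnz : n ≠ z := by intro h; rw [h, hxz] at hxn; exact one_ne_zero hxn.symm
      simp [hinv n z hnz]
    · rintro ⟨n, m⟩ ha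
      rw [Finset.mem_offDiag] at ha
      simp [hinv n m ha.2.2]
  rw [Finset.card_product, Finset.offDiag_card] at hbij
  have hNpos : 0 < N.card := by
    obtain ⟨j, hj⟩ := Function.ne_iff.mp hx
    exact Finset.card_pos.mpr ⟨j, (hmemN j).mpr (zmod2_ne_zero hj)⟩
  have htot : N.card + Z.card = Fintype.card V := by
    rw [hN, hZ]
    rw [Finset.card_filter_add_card_filter_not]
    exact Finset.card_univ
  have hz : Z.card = N.card - 1 := by
    have h2' : N.card * Z.card = N.card * (N.card - 1) := by
      rw [hbij, Nat.mul_sub, mul_one]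
    exact Nat.eq_of_mul_eq_mul_left hNpos h2'
  omega

end Aux

/-- If `D ≤ GF(2)^{w-1}` is an `i`-dimensional subspace orthogonal to all blocks
of an STS(w−1) `B`, and `M` is an `i × (w−1)` generator matrix for `D`, then each
of the `2^i − 1` nonzero columns of height `i` occurs exactly `w/2^i` times as a
column of `M`, and the all-zero column occurs `w/2^i − 1` times; in particular
`2^i ∣ w`. -/
theorem dual_generator_matrix_columns_gf2 (w i : ℕ)
    (B : Finset (Finset (Fin (w - 1)))) (hB : IsSTS B)
    (M : Fin i → Fin (w - 1) → ZMod 2)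
    (hindep : LinearIndependent (ZMod 2) M)
    (horth : ∀ t : Fin i, ∀ b ∈ B, ∑ j ∈ b, M t j = 0) :
    2 ^ i ∣ w ∧
    (∀ c : Fin i → ZMod 2, c ≠ 0 →
      (Finset.univ.filter (fun j : Fin (w - 1) => (fun t => M t j) = c)).card = w / 2 ^ i) ∧
    (Finset.univ.filter (fun j : Fin (w - 1) => (fun t => M t j) = 0)).card = w / 2 ^ i - 1 := by
  classical
  by_cases hw0 : w = 0
  · subst hw0
    have hie : IsEmpty (Fin i) := by
      constructor
      intro t
      have hsub : Subsingleton (Fin (0 - 1) → ZMod 2) := by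
        have h01 : (0 - 1 : ℕ) = 0 := rfl
        rw [h01]
        infer_instance
      exact hindep.ne_zero t (@Subsingleton.elim _ hsub _ _)
    refine ⟨dvd_zero _, ?_, ?_⟩
    · intro c hc
      exact absurd (funext fun t => hie.elim t) hc
    · simp
  · have hw : 1 ≤ w := Nat.one_le_iff_ne_zero.mpr hw0
    -- the sum over columns for a nonzero combination c
    have hT : ∀ c : Fin i → ZMod 2, c ≠ 0 →
        (∑ j : Fin (w-1), STSsgn (∑ t, c t * M t j)) = -1 := by
      intro c hc
      set x : Fin (w-1) → ZMod 2 := fun j => ∑ t, c t * M t j with hxdef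
      have hx : x ≠ 0 := by
        intro h0
        apply hc
        funext t
        refine Fintype.linearIndependent_iff.mp hindep c ?_ t
        funext j
        have : x j = 0 := congrFun h0 j
        simpa [hxdef] using this
      have horthx : ∀ b ∈ B, ∑ j ∈ b, x j = 0 := by
        intro b hb
        rw [hxdef]
        rw [Finset.sum_comm]
        simp only [← Finset.mul_sum]
        rw [Finset.sum_congr rfl (fun t _ => by rw [horth t b hb, mul_zero])]
        simp
      have hsupp := sts_support hB hx horthx
      rw [Fintype.card_fin] at hsupp
      set N := Finset.univ.filter fun j => x j = 1 with hN
      have htot : N.card + (Finset.univ.filter fun j => ¬ x j = 1).card = w - 1 := by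
        rw [hN, Finset.card_filter_add_card_filter_not, Finset.card_univ,
          Fintype.card_fin]
      have hval : (∑ j : Fin (w-1), STSsgn (x j)) =
          ((Finset.univ.filter fun j => ¬ x j = 1).card : ℤ) - (N.card : ℤ) := by
        rw [← Finset.sum_filter_add_sum_filter_not Finset.univ (fun j => x j = 1)]
        have e1 : ∑ j ∈ Finset.univ.filter (fun j => x j = 1), STSsgn (x j)
            = ∑ _j ∈ N, (-1 : ℤ) := by
          apply Finset.sum_congr rfl
          intro j hj
          simp only [hN, Finset.mem_filter] at hj
          simp [STSsgn, hj.2]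
        have e2 : ∑ j ∈ Finset.univ.filter (fun j => ¬ x j = 1), STSsgn (x j)
            = ∑ _j ∈ Finset.univ.filter (fun j => ¬ x j = 1), (1 : ℤ) := by
          apply Finset.sum_congr rfl
          intro j hj
          simp only [Finset.mem_filter] at hj
          have : x j = 0 := by
            have h' : ∀ a : ZMod 2, ¬ a = 1 → a = 0 := by decide
            exact h' _ hj.2
          simp [STSsgn, this]
        rw [e1, e2, Finset.sum_const, Finset.sum_const]
        simp
        ring
      rw [hval]
      omega
    -- the Fourier-inversion identity for every column value d
    have main : ∀ d : Fin i → ZMod 2,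
        (2 ^ i : ℤ) * ((Finset.univ.filter
            (fun j : Fin (w - 1) => (fun t => M t j) = d)).card : ℤ)
          = (w : ℤ) - (if d = 0 then (2 ^ i : ℤ) else 0) := by
      intro d
      have hA : (∑ c : Fin i → ZMod 2,
            STSsgn (∑ t, c t * d t) * (∑ j : Fin (w-1), STSsgn (∑ t, c t * M t j)))
          = ((Finset.univ.filter
              (fun j : Fin (w - 1) => (fun t => M t j) = d)).card : ℤ) * 2 ^ i := by
        calc ∑ c : Fin i → ZMod 2,
              STSsgn (∑ t, c t * d t) * (∑ j : Fin (w-1), STSsgn (∑ t, c t * M t j))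
            = ∑ c : Fin i → ZMod 2, ∑ j : Fin (w-1),
                STSsgn (∑ t, c t * d t) * STSsgn (∑ t, c t * M t j) := by
              exact Finset.sum_congr rfl fun c _ => Finset.mul_sum _ _ _
          _ = ∑ j : Fin (w-1), ∑ c : Fin i → ZMod 2,
                STSsgn (∑ t, c t * d t) * STSsgn (∑ t, c t * M t j) :=
              Finset.sum_comm
          _ = ∑ j : Fin (w-1), ∑ c : Fin i → ZMod 2,
                STSsgn (∑ t, c t * (fun t => d t + M t j) t) := by
              refine Finset.sum_congr rfl fun j _ => Finset.sum_congr rfl fun c _ => ?_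
              rw [← STSsgn_add]
              congr 1
              rw [← Finset.sum_add_distrib]
              exact Finset.sum_congr rfl fun t _ => (mul_add _ _ _).symm
          _ = ∑ j : Fin (w-1), (if (fun t => d t + M t j) = 0 then (2 ^ i : ℤ) else 0) :=
              Finset.sum_congr rfl fun j _ => STSsgn_sum _
          _ = ∑ j : Fin (w-1), (if (fun t => M t j) = d then (2 ^ i : ℤ) else 0) := by
              refine Finset.sum_congr rfl fun j _ => ?_
              congr 1
              rw [funext_iff, funext_iff]
              have h2 : ∀ a b : ZMod 2, a + b = 0 ↔ b = a := by decide
              simp only [Pi.zero_apply]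
              exact propext (forall_congr' fun t => h2 (d t) (M t j))
          _ = ((Finset.univ.filter
                (fun j : Fin (w - 1) => (fun t => M t j) = d)).card : ℤ) * 2 ^ i := by
              rw [← Finset.sum_filter, Finset.sum_const, nsmul_eq_mul]
      have hB' : (∑ c : Fin i → ZMod 2,
            STSsgn (∑ t, c t * d t) * (∑ j : Fin (w-1), STSsgn (∑ t, c t * M t j)))
          = (w : ℤ) - (if d = 0 then (2 ^ i : ℤ) else 0) := by
        have step : ∀ c : Fin i → ZMod 2,
            STSsgn (∑ t, c t * d t) * (∑ j : Fin (w-1), STSsgn (∑ t, c t * M t j))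
            = -STSsgn (∑ t, c t * d t)
              + (if c = 0 then STSsgn (∑ t, c t * d t) * w else 0) := by
          intro c
          by_cases hc : c = 0
          · subst hc
            have hs : (∑ j : Fin (w-1), STSsgn (∑ t, (0 : Fin i → ZMod 2) t * M t j))
                = (w : ℤ) - 1 := by
              simp [STSsgn]
              rw [Nat.cast_sub hw, Nat.cast_one]
            have h0 : (∑ t, (0 : Fin i → ZMod 2) t * d t) = (0 : ZMod 2) := by simp
            rw [hs, if_pos rfl, h0]
            have hs0 : STSsgn 0 = 1 := rfl
            rw [hs0]
            ring
          · rw [hT c hc, if_neg hc]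
            ring
        rw [Finset.sum_congr rfl fun c _ => step c, Finset.sum_add_distrib,
          Finset.sum_neg_distrib, STSsgn_sum d,
          Finset.sum_ite_eq' Finset.univ (0 : Fin i → ZMod 2)]
        have h0 : (∑ t, (0 : Fin i → ZMod 2) t * d t) = (0 : ZMod 2) := by simp
        rw [h0]
        have hs0 : STSsgn 0 = 1 := rfl
        rw [hs0, if_pos (Finset.mem_univ (0 : Fin i → ZMod 2))]
        ring
      rw [← hB', hA]
      ring
    -- assemble the three conclusions
    have h0 := main 0
    rw [if_pos rfl] at h0
    have h0' : 2 ^ i * ((Finset.univ.filter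
        (fun j : Fin (w - 1) => (fun t => M t j) = 0)).card + 1) = w := by
      have : (2 ^ i : ℤ) * (((Finset.univ.filter
          (fun j : Fin (w - 1) => (fun t => M t j) = 0)).card : ℤ) + 1) = w := by
        linarith [h0]
      exact_mod_cast this
    have hpow : 0 < 2 ^ i := Nat.pow_pos (by norm_num)
    have hdiv : w / 2 ^ i = (Finset.univ.filter
        (fun j : Fin (w - 1) => (fun t => M t j) = 0)).card + 1 := by
      have hq := Nat.mul_div_cancel_left ((Finset.univ.filter
        (fun j : Fin (w - 1) => (fun t => M t j) = 0)).card + 1) hpow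
      rw [h0'] at hq
      exact hq
    refine ⟨⟨_, h0'.symm⟩, ?_, by omega⟩
    intro c hc
    have hc' := main c
    rw [if_neg hc, sub_zero] at hc'
    have hcN : 2 ^ i * (Finset.univ.filter
        (fun j : Fin (w - 1) => (fun t => M t j) = c)).card = w := by
      exact_mod_cast hc'
    have hq := Nat.mul_div_cancel_left ((Finset.univ.filter
        (fun j : Fin (w - 1) => (fun t => M t j) = c)).card) hpow
    rw [hcN] at hq
    exact hq.symm
end

section
/- Let B be a Steiner triple system on {1,...,w−1} with an i-dimensional dual-orthogonal subspace D ≤ GF(2)^{w−1} (rows of a generator matrix M of D orthogonal to all blocks). Let a be a nonzero column of M, J the set of positions where column a occurs, and K the set of positions where the all-zero column occurs. Then |J| = |K| + 1. -/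
/-- Let `M` be a rank-`i` matrix over GF(2) whose rows are orthogonal to all
blocks of an STS on `{1,…,w−1}`. If `a` is a nonzero column of `M`, `J` the set
of positions where column `a` occurs and `K` the set of positions where the
all-zero column occurs, then `|J| = |K| + 1`. -/
theorem nonzero_column_count_gf2 (w i : ℕ)
    (B : Finset (Finset (Fin (w - 1)))) (hB : IsSTS B)
    (M : Fin i → Fin (w - 1) → ZMod 2)
    (hindep : LinearIndependent (ZMod 2) M)
    (horth : ∀ t : Fin i, ∀ b ∈ B, ∑ j ∈ b, M t j = 0)
    (a : Fin i → ZMod 2) (ha : a ≠ 0)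
    (j₀ : Fin (w - 1)) (hj₀ : (fun t => M t j₀) = a) :
    (Finset.univ.filter (fun j : Fin (w - 1) => (fun t => M t j) = a)).card =
      (Finset.univ.filter (fun j : Fin (w - 1) => (fun t => M t j) = 0)).card + 1 := by
  classical
  obtain ⟨h3, hpair⟩ := hB
  have h20 : (2 : ZMod 2) = 0 := by decide
  -- key: third point of a pair
  have key : ∀ x y : Fin (w-1), x ≠ y → ∃ z : Fin (w-1), z ≠ x ∧ z ≠ y ∧
      ({x, y, z} : Finset (Fin (w-1))) ∈ B ∧
      (fun t => M t z) = (fun t => M t x) + (fun t => M t y) := by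
    intro x y hxy
    obtain ⟨b, ⟨hbB, hsub⟩, _⟩ := hpair {x, y} (Finset.card_pair hxy)
    have hcard := h3 b hbB
    have hlt : ({x, y} : Finset (Fin (w-1))).card < b.card := by
      rw [Finset.card_pair hxy, hcard]; norm_num
    obtain ⟨z, hzb, hz⟩ := Finset.exists_of_ssubset
      ((HasSubset.Subset.ssubset_of_ne hsub (by intro h; rw [h] at hlt; exact lt_irrefl _ hlt)))
    have hzx : z ≠ x := fun h => hz (by simp [h])
    have hzy : z ≠ y := fun h => hz (by simp [h])
    have hsub' : ({x, y, z} : Finset (Fin (w-1))) ⊆ b := by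
      intro u hu
      simp only [Finset.mem_insert, Finset.mem_singleton] at hu
      rcases hu with h | h | h
      · exact h ▸ hsub (by simp)
      · exact h ▸ hsub (by simp)
      · exact h ▸ hzb
    have hbeq : b = ({x, y, z} : Finset (Fin (w-1))) := by
      refine (Finset.eq_of_subset_of_card_le hsub' ?_).symm
      rw [hcard]
      rw [Finset.card_insert_of_notMem (by simp [hxy, hzx.symm]),
        Finset.card_insert_of_notMem (by simp [hzy.symm]), Finset.card_singleton]
    refine ⟨z, hzx, hzy, hbeq ▸ hbB, ?_⟩
    funext t
    have hs := horth t b hbB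
    rw [hbeq, Finset.sum_insert (by simp [hxy, hzx.symm]),
      Finset.sum_insert (by simp [hzy.symm]), Finset.sum_singleton] at hs
    have : M t z = M t x + M t y := by
      linear_combination hs - (M t x + M t y) * h20
    simpa using this
  -- uniqueness of the third point
  have key2 : ∀ x y z z' : Fin (w-1), x ≠ y → z ≠ x → z ≠ y → z' ≠ x → z' ≠ y →
      ({x, y, z} : Finset (Fin (w-1))) ∈ B → ({x, y, z'} : Finset (Fin (w-1))) ∈ B →
      z = z' := by
    intro x y z z' hxy hzx hzy hzx' hzy' hz hz'
    obtain ⟨b, _, huniq⟩ := hpair {x, y} (Finset.card_pair hxy)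
    have h1 : ({x, y, z} : Finset (Fin (w-1))) = b :=
      huniq _ ⟨hz, by intro u hu; simp only [Finset.mem_insert, Finset.mem_singleton] at hu ⊢; tauto⟩
    have h2 : ({x, y, z'} : Finset (Fin (w-1))) = b :=
      huniq _ ⟨hz', by intro u hu; simp only [Finset.mem_insert, Finset.mem_singleton] at hu ⊢; tauto⟩
    have : z' ∈ ({x, y, z} : Finset (Fin (w-1))) := by
      rw [h1, ← h2]; simp
    simp only [Finset.mem_insert, Finset.mem_singleton] at this
    tauto
  -- the third-point map from j₀
  set trd : Fin (w-1) → Fin (w-1) := fun y => if h : j₀ ≠ y then (key j₀ y h).choose else y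
    with htrddef
  have htrd : ∀ y : Fin (w-1), y ≠ j₀ → trd y ≠ j₀ ∧ trd y ≠ y ∧
      ({j₀, y, trd y} : Finset (Fin (w-1))) ∈ B ∧
      (fun t => M t (trd y)) = (fun t => M t j₀) + (fun t => M t y) := by
    intro y hy
    have h : j₀ ≠ y := hy.symm
    have := (key j₀ y h).choose_spec
    simp only [htrddef, dif_pos h]
    exact this
  have hinv : ∀ y : Fin (w-1), y ≠ j₀ → trd (trd y) = y := by
    intro y hy
    obtain ⟨h1, h2, h3', _⟩ := htrd y hy
    obtain ⟨g1, g2, g3, _⟩ := htrd (trd y) h1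
    refine key2 j₀ (trd y) (trd (trd y)) y h1.symm g1 g2 hy h2.symm g3 ?_
    have : ({j₀, trd y, y} : Finset (Fin (w-1))) = ({j₀, y, trd y} : Finset (Fin (w-1))) := by
      ext u; simp only [Finset.mem_insert, Finset.mem_singleton]; tauto
    rw [this]; exact h3'
  have hj₀mem : j₀ ∈ Finset.univ.filter (fun j : Fin (w-1) => (fun t => M t j) = a) := by
    simp [hj₀]
  rw [← Finset.card_erase_add_one hj₀mem]
  congr 1
  refine Finset.card_nbij' trd trd ?_ ?_ ?_ ?_
  · intro j hj
    rw [Finset.mem_coe, Finset.mem_erase, Finset.mem_filter] at hj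
    obtain ⟨hjne, _, hja⟩ := hj
    obtain ⟨_, _, _, hcol⟩ := htrd j hjne
    rw [Finset.mem_coe, Finset.mem_filter]
    refine ⟨Finset.mem_univ _, ?_⟩
    rw [hcol, hj₀, hja]
    funext t
    exact CharTwo.add_self_eq_zero (a t)
  · intro k hk
    rw [Finset.mem_coe, Finset.mem_filter] at hk
    obtain ⟨_, hk0⟩ := hk
    have hkne : k ≠ j₀ := by
      intro h; apply ha; rw [← hj₀, ← h, hk0]
    obtain ⟨h1, _, _, hcol⟩ := htrd k hkne
    rw [Finset.mem_coe, Finset.mem_erase, Finset.mem_filter]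
    refine ⟨h1, Finset.mem_univ _, ?_⟩
    rw [hcol, hj₀, hk0, add_zero]
  · intro j hj
    rw [Finset.mem_coe, Finset.mem_erase] at hj
    exact hinv j hj.1
  · intro k hk
    rw [Finset.mem_coe, Finset.mem_filter] at hk
    have hkne : k ≠ j₀ := by
      intro h; apply ha; rw [← hj₀, ← h, hk.2]
    exact hinv k hkne
end

section
/- There is no Steiner triple system of order v > 3 that simultaneously has 2-rank less than v and 3-rank less than v − 1. -/
-- third point lemma
lemma exists_third {v : ℕ} {B : Finset (Finset (Fin v))} (hB : IsSTS B)
    (a c : Fin v) (hac : a ≠ c) :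
    ∃ d, d ≠ a ∧ d ≠ c ∧ {a, c, d} ∈ B ∧
      ∀ b ∈ B, a ∈ b → c ∈ b → b = {a, c, d} := by
  obtain ⟨hcard, hpair⟩ := hB
  obtain ⟨b, ⟨hbB, hsub⟩, huniq⟩ := hpair {a, c} (Finset.card_pair hac)
  have hab : a ∈ b := hsub (by simp)
  have hcb : c ∈ b := hsub (by simp)
  have hb3 := hcard b hbB
  have hdiff : (b \ {a, c}).card = 1 := by
    rw [Finset.card_sdiff_of_subset hsub, hb3, Finset.card_pair hac]
  obtain ⟨d, hd⟩ := Finset.card_eq_one.mp hdiff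
  have hdmem : d ∈ b \ ({a, c} : Finset (Fin v)) := hd ▸ Finset.mem_singleton_self d
  rw [Finset.mem_sdiff, Finset.mem_insert, Finset.mem_singleton] at hdmem
  obtain ⟨hdb, hdn⟩ := hdmem
  push_neg at hdn
  have hbeq : b = {a, c, d} := by
    refine (Finset.eq_of_subset_of_card_le ?_ ?_).symm
    · intro x hx
      simp only [Finset.mem_insert, Finset.mem_singleton] at hx
      rcases hx with h | h | h <;> subst h <;> assumption
    · rw [hb3, Finset.card_insert_of_notMem (by simp [hac, Ne.symm hdn.1]),
        Finset.card_insert_of_notMem (by simp [Ne.symm hdn.2]), Finset.card_singleton]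
  exact ⟨d, hdn.1, hdn.2, hbeq ▸ hbB, fun b' hb' ha' hc' => by
    rw [← hbeq]
    exact huniq b' ⟨hb', by intro x hx; simp at hx; rcases hx with h|h <;> subst h <;> assumption⟩⟩


lemma dual_eq_sum' {K : Type*} [CommRing K] {v : ℕ} (f : (Fin v → K) →ₗ[K] K) (w : Fin v → K) :
    f w = ∑ j, w j * f (Pi.single j 1) := by
  conv_lhs => rw [← Finset.univ_sum_single w]
  rw [map_sum]
  refine Finset.sum_congr rfl fun j _ => ?_
  rw [show w j = w j • (1:K) by simp, Pi.single_smul', map_smul, smul_eq_mul, smul_eq_mul, mul_one]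

lemma ann_finrank' {K : Type*} [Field K] {v : ℕ} (U : Submodule K (Fin v → K)) :
    Module.finrank K U + Module.finrank K U.dualAnnihilator = v := by
  have h1 : Module.finrank K ((Fin v → K) ⧸ U) = Module.finrank K U.dualAnnihilator :=
    (Subspace.quotEquivAnnihilator U).finrank_eq
  have h2 := U.finrank_quotient_add_finrank
  have hfr : Module.finrank K (Fin v → K) = v := by simp
  omega

lemma exists_orth' {K : Type*} [Field K] {v : ℕ} (U : Submodule K (Fin v → K))
    (h : Module.finrank K U < v) :
    ∃ y : Fin v → K, y ≠ 0 ∧ ∀ u ∈ U, ∑ j, u j * y j = 0 := by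
  have hann := ann_finrank' U
  have hpos : 0 < Module.finrank K U.dualAnnihilator := by omega
  have hbot : U.dualAnnihilator ≠ ⊥ := by
    intro hb; rw [hb, finrank_bot] at hpos; omega
  obtain ⟨f, hfU, hf0⟩ := Submodule.exists_mem_ne_zero_of_ne_bot hbot
  refine ⟨fun j => f (Pi.single j 1), ?_, ?_⟩
  · intro hy0
    apply hf0
    refine LinearMap.ext fun w => ?_
    rw [LinearMap.zero_apply, dual_eq_sum' f w]
    have h0 : ∀ j : Fin v, f (Pi.single j 1) = 0 := fun j => congrFun hy0 j
    simp [h0]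
  · intro u hu
    rw [← dual_eq_sum' f u]
    exact (Submodule.mem_dualAnnihilator f).mp hfU u hu

lemma exists_orth_nonconst' {K : Type*} [Field K] {v : ℕ} (hv : 2 ≤ v)
    (U : Submodule K (Fin v → K)) (h : Module.finrank K U < v - 1) :
    ∃ y : Fin v → K, (∃ a c, y a ≠ y c) ∧ ∀ u ∈ U, ∑ j, u j * y j = 0 := by
  set g : (Fin v → K) →ₗ[K] K := ∑ j, LinearMap.proj j with hg
  have hgapp : ∀ w : Fin v → K, g w = ∑ j, w j := by
    intro w; simp [hg]
  have hann := ann_finrank' U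
  have h2 : 2 ≤ Module.finrank K U.dualAnnihilator := by omega
  have hnle : ¬ (U.dualAnnihilator ≤ Submodule.span K {g}) := by
    intro hle
    have hm := Submodule.finrank_mono hle
    have hsp : Module.finrank K (Submodule.span K ({g} : Set (Module.Dual K (Fin v → K)))) ≤ 1 := by
      by_cases hg0 : g = 0
      · rw [hg0, Submodule.span_zero_singleton]; simp
      · rw [finrank_span_singleton hg0]
    omega
  obtain ⟨f, hfU, hfn⟩ := SetLike.not_le_iff_exists.mp hnle
  refine ⟨fun j => f (Pi.single j 1), ?_, ?_⟩
  · by_contra hc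
    push_neg at hc
    apply hfn
    have j0 : Fin v := ⟨0, by omega⟩
    refine Submodule.mem_span_singleton.mpr ⟨f (Pi.single j0 1), ?_⟩
    refine LinearMap.ext fun w => ?_
    rw [LinearMap.smul_apply, dual_eq_sum' f w, hgapp, smul_eq_mul, Finset.mul_sum]
    refine Finset.sum_congr rfl fun j _ => ?_
    rw [hc j j0, mul_comm]
  · intro u hu
    rw [← dual_eq_sum' f u]
    exact (Submodule.mem_dualAnnihilator f).mp hfU u hu

/-- The characteristic vector of a block, over GF(p). -/
def charVec (p v : ℕ) (b : Finset (Fin v)) : Fin v → ZMod p :=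
  fun j => if j ∈ b then 1 else 0

lemma charVec_sum {p v : ℕ} (y : Fin v → ZMod p) (b : Finset (Fin v)) :
    ∑ j, charVec p v b j * y j = ∑ j ∈ b, y j := by
  simp only [charVec, ite_mul, one_mul, zero_mul]
  rw [Finset.sum_ite_mem, Finset.univ_inter]

lemma sts_contradiction (v : ℕ) (hv : 3 < v)
    (B : Finset (Finset (Fin v))) (hB : IsSTS B)
    (x : Fin v → ZMod 2) (hx0 : x ≠ 0) (hxo : ∀ b ∈ B, ∑ j ∈ b, x j = 0)
    (y : Fin v → ZMod 3) (hyn : ∃ a c, y a ≠ y c) (hyo : ∀ b ∈ B, ∑ j ∈ b, y j = 0) :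
    False := by
  choose! thd hta htc htB htu using fun (a c : Fin v) => exists_third hB a c
  -- inverse property
  have hinv : ∀ a c : Fin v, a ≠ c → thd a (thd a c) = c := by
    intro a c h
    have had : a ≠ thd a c := (hta a c h).symm
    have h2 := htu a (thd a c) had {a, c, thd a c} (htB a c h) (by simp) (by simp)
    have hmem : c ∈ ({a, thd a c, thd a (thd a c)} : Finset (Fin v)) := by
      rw [← h2]; simp
    simp only [Finset.mem_insert, Finset.mem_singleton] at hmem
    rcases hmem with h' | h' | h'
    · exact absurd h'.symm h
    · exact absurd h'.symm (htc a c h)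
    · exact h'.symm
  -- sums over a block
  have hsum : ∀ {M : Type} [AddCommMonoid M] (z : Fin v → M) (a c : Fin v), a ≠ c →
      ∑ j ∈ ({a, c, thd a c} : Finset (Fin v)), z j = z a + z c + z (thd a c) := by
    intro M _ z a c h
    rw [Finset.sum_insert (by simp [h, Ne.symm (hta a c h)]),
      Finset.sum_insert (by simp [Ne.symm (htc a c h)]), Finset.sum_singleton, add_assoc]
  have hxt : ∀ a c : Fin v, a ≠ c → x (thd a c) = x a + x c := by
    intro a c h
    have h0 := hxo _ (htB a c h)
    rw [hsum x a c h] at h0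
    revert h0
    generalize x a = p; generalize x c = q; generalize x (thd a c) = r
    revert p q r; decide
  have hyt : ∀ a c : Fin v, a ≠ c → y a + y c + y (thd a c) = 0 := by
    intro a c h
    have h0 := hyo _ (htB a c h)
    rwa [hsum y a c h] at h0
  have fact1 : ∀ p q r e' : ZMod 3, p + q + r = 0 → p + q + e' = 0 → r = e' := by decide
  have fact2 : ∀ p d e' : ZMod 3, p ≠ d → p + d + e' = 0 → p ≠ e' := by decide
  -- equal class sizes on a thd-closed set with nonconstant y
  have classes : ∀ T : Finset (Fin v),
      (∀ a ∈ T, ∀ c ∈ T, a ≠ c → thd a c ∈ T) →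
      (∃ a ∈ T, ∃ c ∈ T, y a ≠ y c) →
      ∀ e : ZMod 3, 3 * (T.filter (fun j => y j = e)).card = T.card := by
    intro T hTc ⟨a, haT, c, hcT, hyac⟩ e
    have hac : a ≠ c := fun h => hyac (by rw [h])
    set c0 := y a with hc0
    set c1 := y c with hc1
    set c2 := -(c0 + c1) with hc2
    have card_le : ∀ s ∈ T, ∀ d e' : ZMod 3, y s ≠ d → y s + d + e' = 0 →
        (T.filter (fun j => y j = d)).card ≤ (T.filter (fun j => y j = e')).card := by
      intro s hsT d e' hsd hde
      apply Finset.card_le_card_of_injOn (fun z => thd s z)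
      · intro z hz
        rw [Finset.mem_coe, Finset.mem_filter] at hz
        obtain ⟨hzT, hzd⟩ := hz
        have hsz : s ≠ z := fun h => hsd (by rw [h, hzd])
        rw [Finset.mem_coe, Finset.mem_filter]
        refine ⟨hTc s hsT z hzT hsz, ?_⟩
        have h0 := hyt s z hsz
        rw [hzd] at h0
        exact fact1 _ _ _ _ h0 hde
      · intro z1 hz1 z2 hz2 hzz
        rw [Finset.coe_filter, Set.mem_setOf_eq] at hz1 hz2
        have hs1 : s ≠ z1 := fun h => hsd (by rw [h, hz1.2])
        have hs2 : s ≠ z2 := fun h => hsd (by rw [h, hz2.2])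
        have hzz' : thd s z1 = thd s z2 := hzz
        rw [← hinv s z1 hs1, hzz', hinv s z2 hs2]
    have card_eq : ∀ s ∈ T, ∀ d e' : ZMod 3, y s ≠ d → y s + d + e' = 0 →
        (T.filter (fun j => y j = d)).card = (T.filter (fun j => y j = e')).card := by
      intro s hsT d e' hsd hde
      refine le_antisymm (card_le s hsT d e' hsd hde) (card_le s hsT e' d ?_ ?_)
      · exact fact2 _ _ _ hsd hde
      · linear_combination hde
    have h01 : c0 ≠ c1 := hyac
    have e12 : (T.filter (fun j => y j = c1)).card = (T.filter (fun j => y j = c2)).card :=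
      card_eq a haT c1 c2 hyac (by rw [hc2]; ring)
    have e02 : (T.filter (fun j => y j = c0)).card = (T.filter (fun j => y j = c2)).card :=
      card_eq c hcT c0 c2 (Ne.symm hyac) (by rw [hc2]; ring)
    have huniv : (Finset.univ : Finset (ZMod 3)) = {c0, c1, c2} := by
      revert h01; rw [hc2]; generalize c0 = p; generalize c1 = q; revert p q; decide
    have hsplit : T.card = ∑ e' : ZMod 3, (T.filter (fun j => y j = e')).card :=
      Finset.card_eq_sum_card_fiberwise (fun j _ => Finset.mem_univ (y j))
    have h012 : c0 ≠ c2 ∧ c1 ≠ c2 := by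
      revert h01; rw [hc2]; generalize c0 = p; generalize c1 = q; revert p q; decide
    rw [huniv, Finset.sum_insert (by simp [h01, h012.1]), Finset.sum_insert (by simp [h012.2]),
      Finset.sum_singleton] at hsplit
    have hecase : e = c0 ∨ e = c1 ∨ e = c2 := by
      have : e ∈ ({c0, c1, c2} : Finset (ZMod 3)) := huniv ▸ Finset.mem_univ e
      simpa using this
    rcases hecase with h' | h' | h' <;> subst h' <;> omega
  -- GF(2) structure
  have hx01 : ∀ j : Fin v, x j = 0 ∨ x j = 1 := by
    intro j; generalize x j = p; revert p; decide
  set S := Finset.univ.filter (fun j => x j = 1) with hS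
  set T := Finset.univ.filter (fun j => x j = 0) with hT
  have hTclosed : ∀ a ∈ T, ∀ c ∈ T, a ≠ c → thd a c ∈ T := by
    intro a ha c hc h
    rw [hT, Finset.mem_filter] at ha hc ⊢
    refine ⟨Finset.mem_univ _, ?_⟩
    rw [hxt a c h, ha.2, hc.2, add_zero]
  obtain ⟨s0, hs0⟩ : ∃ s0, x s0 = 1 := by
    by_contra hno
    push_neg at hno
    apply hx0
    ext j
    rcases hx01 j with h' | h'
    · exact h'
    · exact absurd h' (hno j)
  have hs0S : s0 ∈ S := by rw [hS, Finset.mem_filter]; exact ⟨Finset.mem_univ _, hs0⟩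
  -- |S.erase s0| = |T|
  have hcards : (S.erase s0).card = T.card := by
    apply Finset.card_bij' (fun z _ => thd s0 z) (fun w _ => thd s0 w)
    · intro z hz
      rw [Finset.mem_erase, hS, Finset.mem_filter] at hz
      obtain ⟨hzs, _, hz1⟩ := hz
      rw [hT, Finset.mem_filter]
      refine ⟨Finset.mem_univ _, ?_⟩
      rw [hxt s0 z (Ne.symm hzs), hs0, hz1]
      decide
    · intro w hw
      rw [hT, Finset.mem_filter] at hw
      have hws : s0 ≠ w := fun h => by rw [← h, hs0] at hw; exact absurd hw.2 (by decide)
      rw [Finset.mem_erase, hS, Finset.mem_filter]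
      have hne : thd s0 w ≠ s0 := hta s0 w hws
      refine ⟨hne, Finset.mem_univ _, ?_⟩
      rw [hxt s0 w hws, hs0, hw.2, add_zero]
    · intro z hz
      rw [Finset.mem_erase] at hz
      exact hinv s0 z (Ne.symm hz.1)
    · intro w hw
      rw [hT, Finset.mem_filter] at hw
      have hws : s0 ≠ w := fun h => by rw [← h, hs0] at hw; exact absurd hw.2 (by decide)
      exact hinv s0 w hws
  have hST : S.card + T.card = v := by
    have hcomp : Sᶜ = T := by
      ext j
      rw [Finset.mem_compl]
      simp only [hS, hT, Finset.mem_filter, Finset.mem_univ, true_and]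
      rcases hx01 j with h' | h' <;> simp [h']
    rw [← hcomp, Finset.card_add_card_compl, Fintype.card_fin]
  have hcardS : 0 < S.card := Finset.card_pos.mpr ⟨s0, hs0S⟩
  have hTv : 2 * T.card + 1 = v := by
    have := Finset.card_erase_of_mem hs0S
    omega
  -- global class sizes
  obtain ⟨ga, gc, hgac⟩ := hyn
  have hglob := classes Finset.univ (fun a _ c _ h => Finset.mem_univ _)
    ⟨ga, Finset.mem_univ _, gc, Finset.mem_univ _, hgac⟩
  -- case split on y constant on T
  by_cases hTy : ∀ a ∈ T, ∀ c ∈ T, y a = y c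
  · -- T is inside one global class
    have hTne : T.Nonempty := by
      rw [← Finset.card_pos]; omega
    obtain ⟨t0, ht0⟩ := hTne
    have hsub : T ⊆ Finset.univ.filter (fun j => y j = y t0) := by
      intro t ht
      rw [Finset.mem_filter]
      exact ⟨Finset.mem_univ _, hTy t ht t0 ht0⟩
    have hle := Finset.card_le_card hsub
    have h3 := hglob (y t0)
    rw [Finset.card_univ, Fintype.card_fin] at h3
    omega
  · push_neg at hTy
    obtain ⟨a, haT, c, hcT, hyac⟩ := hTy
    have hTcard := classes T hTclosed ⟨a, haT, c, hcT, hyac⟩ 0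
    have h3 := hglob 0
    rw [Finset.card_univ, Fintype.card_fin] at h3
    omega

/-- There is no Steiner triple system of order `v > 3` that simultaneously has
2-rank less than `v` and 3-rank less than `v − 1`. -/
theorem no_sts_nonfull_two_and_three_rank (v : ℕ) (hv : 3 < v)
    (B : Finset (Finset (Fin v))) (hB : IsSTS B) :
    ¬ (Module.finrank (ZMod 2) (Submodule.span (ZMod 2) (charVec 2 v '' ↑B)) < v ∧
       Module.finrank (ZMod 3) (Submodule.span (ZMod 3) (charVec 3 v '' ↑B)) < v - 1) := by
  rintro ⟨h2, h3⟩
  obtain ⟨x, hx0, hxorth⟩ := exists_orth' _ h2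
  obtain ⟨y, hyn, hyorth⟩ := exists_orth_nonconst' (by omega) _ h3
  refine sts_contradiction v hv B hB x hx0 ?_ y hyn ?_
  · intro b hb
    rw [← charVec_sum x b]
    exact hxorth _ (Submodule.subset_span (Set.mem_image_of_mem _ hb))
  · intro b hb
    rw [← charVec_sum y b]
    exact hyorth _ (Submodule.subset_span (Set.mem_image_of_mem _ hb))
end

section
/- If a Steiner triple system of order v has 2-rank strictly less than v, then v + 1 is even and the system contains a proper subsystem on exactly (v−1)/2 points (a subset S' of points of size (v−1)/2 such that every block meeting S' in at least two points is contained in S'). -/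
/-- If an STS(v) has 2-rank strictly less than `v`, then `v + 1` is even and the
system contains a proper subsystem on exactly `(v−1)/2` points: a set `S'` of
`(v−1)/2` points such that every block meeting `S'` in at least two points is
contained in `S'`. -/
theorem nonfull_two_rank_subsystem (v : ℕ)
    (B : Finset (Finset (Fin v))) (hB : IsSTS B)
    (hrank : Module.finrank (ZMod 2)
      (Submodule.span (ZMod 2)
        ((fun b : Finset (Fin v) => fun j => if j ∈ b then (1 : ZMod 2) else 0) '' ↑B)) < v) :
    Even (v + 1) ∧
    ∃ S' : Finset (Fin v), S'.card = (v - 1) / 2 ∧ S' ≠ Finset.univ ∧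
      ∀ b ∈ B, 2 ≤ (b ∩ S').card → b ⊆ S' := by
  classical
  obtain ⟨h3, hpair⟩ := hB
  set χ : Finset (Fin v) → (Fin v → ZMod 2) :=
    fun b => fun j => if j ∈ b then (1 : ZMod 2) else 0 with hχ
  set W := Submodule.span (ZMod 2) (χ '' ↑B) with hWdef
  have hWlt : W < ⊤ := by
    rcases lt_or_eq_of_le (le_top : W ≤ ⊤) with h | h
    · exact h
    · exfalso
      rw [h, finrank_top] at hrank
      simp [Module.finrank_pi] at hrank
  obtain ⟨f, hf0, hfmap⟩ := Submodule.exists_dual_map_eq_bot_of_lt_top hWlt inferInstance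
  set r : Fin v → ZMod 2 := fun j => f (Pi.single j 1) with hrdef
  have hzmod : ∀ x : ZMod 2, x = 0 ∨ x = 1 := by decide
  -- every block sums to zero under r
  have hfvec : ∀ b ∈ B, ∑ j ∈ b, r j = 0 := by
    intro b hb
    have hmem : χ b ∈ W := Submodule.subset_span ⟨b, hb, rfl⟩
    have hz : f (χ b) = 0 := by
      have h2 : f (χ b) ∈ Submodule.map f W := Submodule.mem_map_of_mem hmem
      rw [hfmap] at h2; exact (Submodule.mem_bot (ZMod 2)).mp h2
    have hχb : χ b = ∑ j ∈ b, Pi.single j (1 : ZMod 2) := by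
      funext k
      simp [hχ, Finset.sum_apply, Pi.single_apply, Finset.sum_ite_eq]
    rw [← hz, hχb, map_sum]
  -- r is not identically zero
  have hex : ∃ p, r p = 1 := by
    by_contra hcon
    push_neg at hcon
    apply hf0
    apply Module.Basis.ext (Pi.basisFun (ZMod 2) (Fin v))
    intro i
    rcases hzmod (r i) with h | h
    · simpa [Pi.basisFun_apply] using h
    · exact absurd h (hcon i)
  obtain ⟨p, hp1⟩ := hex
  -- third point lemma
  have hthird : ∀ b ∈ B, ∀ j ∈ b, ∀ k ∈ b, ∀ l ∈ b, j ≠ k → j ≠ l → k ≠ l →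
      r j + r k + r l = 0 := by
    intro b hb j hj k hk l hl hjk hjl hkl
    have hsub : ({j, k, l} : Finset (Fin v)) ⊆ b := by
      intro x hx; simp only [Finset.mem_insert, Finset.mem_singleton] at hx
      rcases hx with rfl | rfl | rfl <;> assumption
    have hcard3 : ({j, k, l} : Finset (Fin v)).card = 3 := by
      rw [Finset.card_insert_of_notMem (by simp [hjk, hjl]),
        Finset.card_insert_of_notMem (by simp [hkl]), Finset.card_singleton]
    have hbeq : ({j, k, l} : Finset (Fin v)) = b :=
      Finset.eq_of_subset_of_card_le hsub (by rw [h3 b hb, hcard3])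
    have hsum := hfvec b hb
    rw [← hbeq, Finset.sum_insert (by simp [hjk, hjl]),
      Finset.sum_insert (by simp [hkl]), Finset.sum_singleton] at hsum
    rw [add_assoc]; exact hsum
  set S : Finset (Fin v) := Finset.univ.filter (fun j => r j = 1) with hSdef
  set S' : Finset (Fin v) := Finset.univ.filter (fun j => r j = 0) with hS'def
  have hpS : p ∈ S := by simp [hSdef, hp1]
  have hpnS' : p ∉ S' := by simp [hS'def, hp1]
  -- every block through p has exactly one other support point
  have honep : ∀ b ∈ B, p ∈ b → ((b.erase p).filter (fun j => r j = 1)).card = 1 := by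
    intro b hb hpb
    have hc2 : (b.erase p).card = 2 := by
      rw [Finset.card_erase_of_mem hpb, h3 b hb]
    obtain ⟨j, k, hjk, hbe⟩ := Finset.card_eq_two.mp hc2
    have hj : j ∈ b.erase p := by rw [hbe]; simp
    have hk : k ∈ b.erase p := by rw [hbe]; simp
    have hjp : j ≠ p := (Finset.mem_erase.mp hj).1
    have hkp : k ≠ p := (Finset.mem_erase.mp hk).1
    have hsum := hthird b hb p hpb j (Finset.mem_of_mem_erase hj)
      k (Finset.mem_of_mem_erase hk) (Ne.symm hjp) (Ne.symm hkp) hjk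
    rw [hp1] at hsum
    rw [hbe]
    rcases hzmod (r j) with hj0 | hj1 <;> rcases hzmod (r k) with hk0 | hk1
    · exfalso; rw [hj0, hk0] at hsum; exact absurd hsum (by decide)
    · rw [Finset.filter_insert, Finset.filter_singleton, if_neg (by rw [hj0]; decide),
        if_pos hk1]; simp
    · rw [Finset.filter_insert, Finset.filter_singleton, if_pos hj1,
        if_neg (by rw [hk0]; decide)]; simp
    · exfalso; rw [hj1, hk1] at hsum; exact absurd hsum (by decide)
  set Bp : Finset (Finset (Fin v)) := B.filter (fun b => p ∈ b) with hBpdef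
  have hcard2 : ∀ q : Fin v, q ≠ p → ({p, q} : Finset (Fin v)).card = 2 := by
    intro q hq
    rw [Finset.card_insert_of_notMem (by simp [Ne.symm hq]), Finset.card_singleton]
  -- cover: points other than p are covered by blocks through p
  have hcover : Finset.univ.erase p = Bp.biUnion (fun b => b.erase p) := by
    ext q
    simp only [Finset.mem_erase, Finset.mem_biUnion, Finset.mem_univ, and_true,
      hBpdef, Finset.mem_filter]
    constructor
    · intro hq
      obtain ⟨b, ⟨hbB, hsub⟩, -⟩ := hpair {p, q} (hcard2 q hq)
      exact ⟨b, ⟨hbB, hsub (by simp)⟩, hq, hsub (by simp)⟩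
    · rintro ⟨b, ⟨hbB, hpb⟩, hqb⟩
      exact hqb.1
  have hdisj : ∀ b1 ∈ Bp, ∀ b2 ∈ Bp, b1 ≠ b2 → Disjoint (b1.erase p) (b2.erase p) := by
    intro b1 hb1 b2 hb2 hne
    rw [Finset.disjoint_left]
    intro q hq1 hq2
    rw [hBpdef, Finset.mem_filter] at hb1 hb2
    have hqp : q ≠ p := (Finset.mem_erase.mp hq1).1
    obtain ⟨b, -, huniq⟩ := hpair {p, q} (hcard2 q hqp)
    have e1 : b1 = b := huniq b1 ⟨hb1.1, by
      intro x hx; simp only [Finset.mem_insert, Finset.mem_singleton] at hx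
      rcases hx with rfl | rfl; exacts [hb1.2, Finset.mem_of_mem_erase hq1]⟩
    have e2 : b2 = b := huniq b2 ⟨hb2.1, by
      intro x hx; simp only [Finset.mem_insert, Finset.mem_singleton] at hx
      rcases hx with rfl | rfl; exacts [hb2.2, Finset.mem_of_mem_erase hq2]⟩
    exact hne (e1.trans e2.symm)
  have hcount1 : v - 1 = 2 * Bp.card := by
    have h1 : (Finset.univ.erase p).card = v - 1 := by
      rw [Finset.card_erase_of_mem (Finset.mem_univ p), Finset.card_univ, Fintype.card_fin]
    rw [hcover, Finset.card_biUnion hdisj] at h1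
    rw [← h1, Finset.sum_congr rfl (fun b hb => ?_), Finset.sum_const, smul_eq_mul, mul_comm]
    rw [hBpdef, Finset.mem_filter] at hb
    rw [Finset.card_erase_of_mem hb.2, h3 b hb.1]
  -- bijection between S.erase p and blocks through p
  have hcount2 : (S.erase p).card = Bp.card := by
    apply Finset.card_bij (fun q hq =>
      (hpair {p, q} (hcard2 q (Finset.mem_erase.mp hq).1)).choose)
    · intro q hq
      have hspec := (hpair {p, q} (hcard2 q (Finset.mem_erase.mp hq).1)).choose_spec.1
      rw [hBpdef, Finset.mem_filter]
      exact ⟨hspec.1, hspec.2 (by simp)⟩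
    · intro q1 hq1 q2 hq2 heq
      have hs1 := (hpair {p, q1} (hcard2 q1 (Finset.mem_erase.mp hq1).1)).choose_spec.1
      have hs2 := (hpair {p, q2} (hcard2 q2 (Finset.mem_erase.mp hq2).1)).choose_spec.1
      set b := (hpair {p, q1} (hcard2 q1 (Finset.mem_erase.mp hq1).1)).choose with hbdef
      rw [← heq] at hs2
      have hone := honep b hs1.1 (hs1.2 (by simp))
      have hm1 : q1 ∈ (b.erase p).filter (fun j => r j = 1) := by
        rw [Finset.mem_filter, Finset.mem_erase]
        refine ⟨⟨(Finset.mem_erase.mp hq1).1, hs1.2 (by simp)⟩, ?_⟩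
        have := (Finset.mem_erase.mp hq1).2
        rw [hSdef, Finset.mem_filter] at this; exact this.2
      have hm2 : q2 ∈ (b.erase p).filter (fun j => r j = 1) := by
        rw [Finset.mem_filter, Finset.mem_erase]
        refine ⟨⟨(Finset.mem_erase.mp hq2).1, hs2.2 (by simp)⟩, ?_⟩
        have := (Finset.mem_erase.mp hq2).2
        rw [hSdef, Finset.mem_filter] at this; exact this.2
      exact Finset.card_le_one.mp (le_of_eq hone) q1 hm1 q2 hm2
    · intro b hb
      rw [hBpdef, Finset.mem_filter] at hb
      have hone := honep b hb.1 hb.2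
      obtain ⟨q, hq⟩ := Finset.card_eq_one.mp hone
      have hqmem : q ∈ (b.erase p).filter (fun j => r j = 1) := by rw [hq]; simp
      rw [Finset.mem_filter, Finset.mem_erase] at hqmem
      have hqS : q ∈ S.erase p := by
        rw [Finset.mem_erase, hSdef, Finset.mem_filter]
        exact ⟨hqmem.1.1, Finset.mem_univ q, hqmem.2⟩
      refine ⟨q, hqS, ?_⟩
      have huniq := (hpair {p, q} (hcard2 q hqmem.1.1)).choose_spec.2
      exact (huniq b ⟨hb.1, by
        intro x hx; simp only [Finset.mem_insert, Finset.mem_singleton] at hx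
        rcases hx with rfl | rfl; exacts [hb.2, hqmem.1.2]⟩).symm
  have hSerase : (S.erase p).card = S.card - 1 := Finset.card_erase_of_mem hpS
  have hS1 : 1 ≤ S.card := Finset.card_pos.mpr ⟨p, hpS⟩
  have hpart : S.card + S'.card = v := by
    have := Finset.card_filter_add_card_filter_not
      (s := (Finset.univ : Finset (Fin v))) (p := fun j => r j = 1)
    rw [Finset.card_univ, Fintype.card_fin] at this
    rw [hSdef, hS'def]
    have heq : Finset.filter (fun j => r j = 0) (Finset.univ : Finset (Fin v)) =
        Finset.filter (fun a => ¬ r a = 1) Finset.univ := by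
      apply Finset.filter_congr
      intro x _
      rcases hzmod (r x) with h | h <;> simp [h]
    rw [heq]
    exact this
  have hkey : v - 1 = 2 * (S.card - 1) := by rw [hcount1, ← hcount2, hSerase]
  refine ⟨⟨S.card, by omega⟩, S', by omega, ?_, ?_⟩
  · intro hSu
    rw [hSu] at hpnS'
    exact hpnS' (Finset.mem_univ p)
  · intro b hb hb2 l hl
    obtain ⟨j, hj, k, hk, hjk⟩ := Finset.one_lt_card.mp hb2
    rw [Finset.mem_inter] at hj hk
    have hrj : r j = 0 := by
      have := hj.2; rw [hS'def, Finset.mem_filter] at this; exact this.2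
    have hrk : r k = 0 := by
      have := hk.2; rw [hS'def, Finset.mem_filter] at this; exact this.2
    rw [hS'def, Finset.mem_filter]
    refine ⟨Finset.mem_univ l, ?_⟩
    by_cases hlj : l = j
    · rw [hlj]; exact hrj
    by_cases hlk : l = k
    · rw [hlk]; exact hrk
    have := hthird b hb j hj.1 k hk.1 l hl hjk (fun h => hlj h.symm) (fun h => hlk h.symm)
    rw [hrj, hrk] at this
    simpa using this
end
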